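/- With A and A_σ as in the previous statement, define w_1 = (0,1,0)^T and w_2 = (1,0,1)^T. Then A_3 A_2 A_1^k w_1 = (1 − 1/2^k) w_2 and A_3 A_2 A_1^k w_2 = (1 − 1/2^k) w_1 + (1/2^k) 𝟙. Consequently, for any sequence k_1, k_2, ... of positive integers with Σ_γ 1/2^{k_γ} < ∞, the infinite product ⋯ A_3 A_2 A_1^{k_2} A_3 A_2 A_1^{k_1} applied to w_2 does not converge to a consensus vector (a multiple of 𝟙 plus convergent error), since Π_γ (1 − 1/2^{k_γ}) converges to a nonzero limit while the image alternates between directions w_1 and w_2. -/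

import Mathlib

open Filter

/-- The asynchronous iteration matrix: row `σ` comes from `A`, others from identity. -/
def asyncM {N : ℕ} (A : Matrix (Fin N) (Fin N) ℝ) (σ : Fin N) : Matrix (Fin N) (Fin N) ℝ :=
  Matrix.of fun i j => if i = σ then A i j else if i = j then 1 else 0

noncomputable def disc {N : ℕ} (x : Fin N → ℝ) : ℝ := (⨆ i, x i) - ⨅ i, x i

noncomputable def A18 : Matrix (Fin 3) (Fin 3) ℝ := !![1/2, 1/2, 0; 0, 0, 1; 1, 0, 0]

/-- One block `A₃ A₂ A₁^k`. -/
noncomputable def block18 (k : ℕ) : Matrix (Fin 3) (Fin 3) ℝ :=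
  asyncM A18 2 * asyncM A18 1 * asyncM A18 0 ^ k

/-- The product of the first `p` blocks: `B(k_p) ⋯ B(k_1)`. -/
noncomputable def iter18 (kseq : ℕ → ℕ) : ℕ → Matrix (Fin 3) (Fin 3) ℝ
  | 0 => 1
  | p + 1 => block18 (kseq (p + 1)) * iter18 kseq p

lemma A1pow (k : ℕ) : asyncM A18 0 ^ k = !![(1/2:ℝ)^k, 1-(1/2)^k, 0; 0, 1, 0; 0, 0, 1] := by
  induction k with
  | zero => ext i j; fin_cases i <;> fin_cases j <;> simp [Matrix.one_apply, Matrix.vecHead, Matrix.vecTail]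
  | succ k ih =>
    rw [pow_succ, ih]
    ext i j
    fin_cases i <;> fin_cases j <;>
      simp [asyncM, A18, Matrix.mul_apply, Fin.sum_univ_three, Matrix.vecHead, Matrix.vecTail] <;> ring

lemma block18_eq (k : ℕ) :
    block18 k = !![(1/2:ℝ)^k, 1-(1/2)^k, 0; 0, 0, 1; (1/2)^k, 1-(1/2)^k, 0] := by
  rw [block18, A1pow]
  ext i j
  fin_cases i <;> fin_cases j <;>
    simp [asyncM, A18, Matrix.mul_apply, Fin.sum_univ_three, Matrix.vecHead, Matrix.vecTail]

lemma block_w1 (k : ℕ) : (block18 k).mulVec ![0, 1, 0] = (1 - (1/2 : ℝ) ^ k) • ![1, 0, 1] := by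
  rw [block18_eq]
  ext i
  fin_cases i <;>
    simp [Matrix.mulVec, dotProduct, Fin.sum_univ_three, Matrix.vecHead, Matrix.vecTail]

lemma block_w2 (k : ℕ) : (block18 k).mulVec ![1, 0, 1] =
    (1 - (1/2 : ℝ) ^ k) • ![0, 1, 0] + ((1/2 : ℝ) ^ k) • ![1, 1, 1] := by
  rw [block18_eq]
  ext i
  fin_cases i <;>
    simp [Matrix.mulVec, dotProduct, Fin.sum_univ_three, Matrix.vecHead, Matrix.vecTail] <;> ring

lemma block_one (k : ℕ) : (block18 k).mulVec ![1, 1, 1] = ![1, 1, 1] := by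
  rw [block18_eq]
  ext i
  fin_cases i <;>
    simp [Matrix.mulVec, dotProduct, Fin.sum_univ_three, Matrix.vecHead, Matrix.vecTail] <;> ring

lemma disc_w2 (a b : ℝ) (ha : 0 ≤ a) : disc (a • ![1, 0, 1] + b • ![1, 1, 1] : Fin 3 → ℝ) = a := by
  have hx : (a • ![1, 0, 1] + b • ![1, 1, 1] : Fin 3 → ℝ) = ![a + b, b, a + b] := by
    ext i; fin_cases i <;> simp <;> ring
  rw [hx, disc]
  have hsup : (⨆ i, (![a + b, b, a + b] : Fin 3 → ℝ) i) = a + b := by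
    apply le_antisymm
    · apply ciSup_le; intro i; fin_cases i <;> simp <;> linarith
    · have := le_ciSup (Set.Finite.bddAbove (Set.finite_range (![a + b, b, a + b] : Fin 3 → ℝ))) (0 : Fin 3); simpa using this
  have hinf : (⨅ i, (![a + b, b, a + b] : Fin 3 → ℝ) i) = b := by
    apply le_antisymm
    · have := ciInf_le (Set.Finite.bddBelow (Set.finite_range (![a + b, b, a + b] : Fin 3 → ℝ))) (1 : Fin 3); simpa using this
    · apply le_ciInf; intro i; fin_cases i <;> simp <;> linarith
  rw [hsup, hinf]; ring

lemma disc_w1 (a b : ℝ) (ha : 0 ≤ a) : disc (a • ![0, 1, 0] + b • ![1, 1, 1] : Fin 3 → ℝ) = a := by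
  have hx : (a • ![0, 1, 0] + b • ![1, 1, 1] : Fin 3 → ℝ) = ![b, a + b, b] := by
    ext i; fin_cases i <;> simp <;> ring
  rw [hx, disc]
  have hsup : (⨆ i, (![b, a + b, b] : Fin 3 → ℝ) i) = a + b := by
    apply le_antisymm
    · apply ciSup_le; intro i; fin_cases i <;> simp <;> linarith
    · have := le_ciSup (Set.Finite.bddAbove (Set.finite_range (![b, a + b, b] : Fin 3 → ℝ))) (1 : Fin 3); simpa using this
  have hinf : (⨅ i, (![b, a + b, b] : Fin 3 → ℝ) i) = b := by
    apply le_antisymm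
    · have := ciInf_le (Set.Finite.bddBelow (Set.finite_range (![b, a + b, b] : Fin 3 → ℝ))) (0 : Fin 3); simpa using this
    · apply le_ciInf; intro i; fin_cases i <;> simp <;> linarith
  rw [hsup, hinf]; ring

lemma one_sub_ge_exp (a : ℝ) (h0 : 0 ≤ a) (h1 : a ≤ 1/2) : Real.exp (-(2*a)) ≤ 1 - a := by
  have h := Real.add_one_le_exp (2*a)
  have h2 : Real.exp (-(2*a)) * Real.exp (2*a) = 1 := by
    rw [← Real.exp_add]; simp
  have h3 : (0:ℝ) < Real.exp (-(2*a)) := Real.exp_pos _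
  nlinarith

lemma iter_form (kseq : ℕ → ℕ) (p : ℕ) :
    ∃ t : ℝ, (iter18 kseq p).mulVec ![1,0,1]
      = (∏ γ ∈ Finset.Icc 1 p, (1 - (1/2:ℝ)^(kseq γ))) •
          (if Even p then ![1,0,1] else ![0,1,0]) + t • ![1,1,1] := by
  induction p with
  | zero => exact ⟨0, by simp [iter18]⟩
  | succ p ih =>
    obtain ⟨t, ht⟩ := ih
    have hprod : ∏ γ ∈ Finset.Icc 1 (p+1), (1 - (1/2:ℝ)^(kseq γ))
        = (1 - (1/2:ℝ)^(kseq (p+1))) * ∏ γ ∈ Finset.Icc 1 p, (1 - (1/2:ℝ)^(kseq γ)) := by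
      rw [Finset.prod_Icc_succ_top (by omega), mul_comm]
    set P := ∏ γ ∈ Finset.Icc 1 p, (1 - (1/2:ℝ)^(kseq γ)) with hP
    set c := (1 - (1/2:ℝ)^(kseq (p+1))) with hc
    have hstep : (iter18 kseq (p+1)).mulVec ![1,0,1]
        = (block18 (kseq (p+1))).mulVec ((iter18 kseq p).mulVec ![1,0,1]) := by
      rw [iter18, ← Matrix.mulVec_mulVec]
    by_cases hp : Even p
    · refine ⟨P * (1/2:ℝ)^(kseq (p+1)) + t, ?_⟩
      rw [hstep, ht, if_pos hp, if_neg (by simpa using Nat.even_add_one.not.mpr (not_not.mpr hp)),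
        hprod]
      rw [Matrix.mulVec_add, Matrix.mulVec_smul, Matrix.mulVec_smul, block_w2 (kseq (p+1)),
        block_one]
      rw [smul_add, smul_smul, smul_smul, add_smul]
      module
    · refine ⟨t, ?_⟩
      rw [hstep, ht, if_neg hp, if_pos (Nat.even_add_one.mpr hp), hprod]
      rw [Matrix.mulVec_add, Matrix.mulVec_smul, Matrix.mulVec_smul, block_w1 (kseq (p+1)),
        block_one, smul_smul]
      ring_nf
      rw [hc, add_comm 1 p]; module

lemma iter_disc (kseq : ℕ → ℕ) (hk : ∀ γ, 1 ≤ kseq γ) (p : ℕ) :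
    disc ((iter18 kseq p).mulVec ![1,0,1])
      = ∏ γ ∈ Finset.Icc 1 p, (1 - (1/2:ℝ)^(kseq γ)) := by
  obtain ⟨t, ht⟩ := iter_form kseq p
  have hP : 0 ≤ ∏ γ ∈ Finset.Icc 1 p, (1 - (1/2:ℝ)^(kseq γ)) := by
    apply Finset.prod_nonneg
    intro γ _
    have : (1/2:ℝ)^(kseq γ) ≤ 1 := pow_le_one₀ (by norm_num) (by norm_num)
    linarith
  rw [ht]
  by_cases hp : Even p
  · rw [if_pos hp]; exact disc_w2 _ _ hP
  · rw [if_neg hp]; exact disc_w1 _ _ hP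


/-- The blocks swap `w₁` and `w₂` up to vanishing error, and when `Σ 2^{-k_γ} < ∞`
the infinite product applied to `w₂` does not converge to consensus. -/
theorem async_product_no_consensus :
    (∀ k : ℕ,
      (block18 k).mulVec ![0, 1, 0] = (1 - (1/2 : ℝ) ^ k) • ![1, 0, 1] ∧
      (block18 k).mulVec ![1, 0, 1] =
        (1 - (1/2 : ℝ) ^ k) • ![0, 1, 0] + ((1/2 : ℝ) ^ k) • ![1, 1, 1]) ∧
    ∀ kseq : ℕ → ℕ, (∀ γ, 1 ≤ kseq γ) →
      Summable (fun γ => ((1 : ℝ) / 2) ^ kseq γ) →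
      ¬ Tendsto (fun p => disc ((iter18 kseq p).mulVec ![1, 0, 1])) atTop (nhds 0) := by
  refine ⟨fun k => ⟨block_w1 k, block_w2 k⟩, ?_⟩
  intro kseq hk hsum hT
  set S := ∑' γ, ((1:ℝ)/2)^(kseq γ) with hS
  set c := Real.exp (-(2*S)) with hcdef
  have hc : 0 < c := Real.exp_pos _
  have hlow : ∀ p, c ≤ disc ((iter18 kseq p).mulVec ![1,0,1]) := by
    intro p
    rw [iter_disc kseq hk p]
    have step1 : c ≤ Real.exp (∑ γ ∈ Finset.Icc 1 p, -(2*((1/2:ℝ)^(kseq γ)))) := by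
      apply Real.exp_le_exp.mpr
      have hsumle : ∑ γ ∈ Finset.Icc 1 p, ((1:ℝ)/2)^(kseq γ) ≤ S :=
        Summable.sum_le_tsum _ (fun γ _ => by positivity) hsum
      have heq : ∑ γ ∈ Finset.Icc 1 p, -(2*((1/2:ℝ)^(kseq γ)))
          = -(2 * ∑ γ ∈ Finset.Icc 1 p, ((1:ℝ)/2)^(kseq γ)) := by
        rw [Finset.mul_sum, ← Finset.sum_neg_distrib]
      rw [heq]; linarith
    have step2 : Real.exp (∑ γ ∈ Finset.Icc 1 p, -(2*((1/2:ℝ)^(kseq γ))))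
        = ∏ γ ∈ Finset.Icc 1 p, Real.exp (-(2*((1/2:ℝ)^(kseq γ)))) := Real.exp_sum _ _
    have step3 : ∏ γ ∈ Finset.Icc 1 p, Real.exp (-(2*((1/2:ℝ)^(kseq γ))))
        ≤ ∏ γ ∈ Finset.Icc 1 p, (1 - (1/2:ℝ)^(kseq γ)) := by
      apply Finset.prod_le_prod (fun γ _ => (Real.exp_pos _).le)
      intro γ _
      apply one_sub_ge_exp _ (by positivity)
      calc ((1:ℝ)/2)^(kseq γ) ≤ (1/2:ℝ)^1 :=
            pow_le_pow_of_le_one (by norm_num) (by norm_num) (hk γ)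
        _ = 1/2 := pow_one _
    linarith [step1, step2 ▸ step1]
  obtain ⟨p, hp⟩ := (hT.eventually_lt_const hc).exists
  exact absurd (hlow p) (not_le.mpr hp)
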